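/- If an m×n matrix M' over Σ is fair w.r.t. γ, then c̃ · |types(M') \ types(M)| ≤ d(M,M'); that is, creating each new type (a type of M' that is not a type of M) accounts for at least c̃ edited rows, since its cluster in M' is a nonempty fair set of size at least c̃ all of whose rows differ between M and M'. -/

import Mathlib

variable {m n c : ℕ} {A : Type*} [Fintype A] [DecidableEq A]

/-- The set of distinct row types of a matrix. -/
def types (M : Fin m → Fin n → A) : Finset (Fin n → A) :=
  Finset.univ.image (fun i => M i)

/-- The number of distinct rows of a matrix. -/
def dr (M : Fin m → Fin n → A) : ℕ := (types M).card

/-- The cluster of a type `τ` in `M`: the set of rows whose type is `τ`. -/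
def cluster (M : Fin m → Fin n → A) (τ : Fin n → A) : Finset (Fin m) :=
  Finset.univ.filter (fun i => M i = τ)

/-- The edit cost between two matrices: the number of positions where they differ. -/
def editCost (M M' : Fin m → Fin n → A) : ℕ :=
  ((Finset.univ : Finset (Fin m × Fin n)).filter (fun p => M p.1 p.2 ≠ M' p.1 p.2)).card

/-- The number of occurrences of color `z` in the coloring `γ`. -/
def colorCount (γ : Fin m → Fin c) (z : Fin c) : ℕ :=
  (Finset.univ.filter (fun i => γ i = z)).card

/-- A set of rows is fair w.r.t. `γ` if it witnesses the same color distribution as `γ`. -/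
def fairSet (γ : Fin m → Fin c) (S : Finset (Fin m)) : Prop :=
  ∀ z : Fin c, m * (S.filter (fun i => γ i = z)).card = colorCount γ z * S.card

/-- A matrix is fair if the cluster of each of its types is fair. -/
def fairMatrix (γ : Fin m → Fin c) (M' : Fin m → Fin n → A) : Prop :=
  ∀ τ ∈ types M', fairSet γ (cluster M' τ)

/-- The fairlet size `c̃ = m / gcd(|γ|_1, …, |γ|_c)`. -/
def fairletSize (γ : Fin m → Fin c) : ℕ :=
  m / Finset.univ.gcd (colorCount γ)

/-- Each new type of a fair matrix accounts for at least `c̃` edited rows. -/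
theorem fairletSize_mul_new_types_le_editCost (hm : 0 < m) (hn : 0 < n)
    (γ : Fin m → Fin c) (hγ : Function.Surjective γ)
    (M M' : Fin m → Fin n → A) (h : fairMatrix γ M') :
    fairletSize γ * (types M' \ types M).card ≤ editCost M M' := by
  classical
  set g := Finset.univ.gcd (colorCount γ) with hgdef
  -- sum of color counts is m
  have hsumcc : ∑ z, colorCount γ z = m := by
    have := Finset.card_eq_sum_card_fiberwise
      (s := (Finset.univ : Finset (Fin m))) (t := Finset.univ) (f := γ)
      (fun x _ => Finset.mem_univ _)
    simpa [colorCount] using this.symm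
  have hgm : g ∣ m := by
    rw [← hsumcc]
    exact Finset.dvd_sum (fun z _ => Finset.gcd_dvd (Finset.mem_univ z))
  have hg0 : 0 < g := by
    rcases Nat.eq_zero_or_pos g with h0 | h0
    · exfalso
      have hz := γ ⟨0, hm⟩
      have hc0 : colorCount γ hz = 0 := Finset.gcd_eq_zero_iff.mp h0 hz (Finset.mem_univ _)
      obtain ⟨i, hi⟩ := hγ hz
      have hmem : (Finset.univ.filter (fun i => γ i = hz)).card ≠ 0 :=
        Finset.card_ne_zero_of_mem (a := i) (by simp [hi])
      exact hmem (by simpa [colorCount] using hc0)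
    · exact h0
  -- each new type's cluster has size at least fairletSize
  have key : ∀ τ ∈ types M' \ types M, fairletSize γ ≤ (cluster M' τ).card := by
    intro τ hτ
    have hτ' := Finset.mem_sdiff.mp hτ
    have hfair := h τ hτ'.1
    obtain ⟨i, _, hi⟩ := Finset.mem_image.mp hτ'.1
    have hne : (cluster M' τ).Nonempty := ⟨i, by simp [cluster, hi]⟩
    set s := (cluster M' τ).card with hs
    have hdvd : m ∣ g * s := by
      have hall : ∀ z ∈ (Finset.univ : Finset (Fin c)), m ∣ colorCount γ z * s :=
        fun z _ => ⟨_, (hfair z).symm⟩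
      have h2 : Finset.univ.gcd (fun z => colorCount γ z * s) = g * s := by
        rw [hgdef]
        simpa using Finset.gcd_mul_right (s := (Finset.univ : Finset (Fin c)))
          (f := colorCount γ) (a := s)
      rw [← h2]
      exact Finset.dvd_gcd hall
    have hdvd2 : fairletSize γ ∣ s := by
      rw [fairletSize, ← hgdef]
      have hm0 : g * (m / g) = m := Nat.mul_div_cancel' hgm
      refine (Nat.mul_dvd_mul_iff_left hg0).mp ?_
      rw [hm0]
      exact hdvd
    exact Nat.le_of_dvd (Finset.card_pos.mpr hne) hdvd2
  -- edited rows
  set R := Finset.univ.filter (fun i => M i ≠ M' i) with hRdef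
  have hdisj : ((types M' \ types M : Finset (Fin n → A)) : Set (Fin n → A)).PairwiseDisjoint (cluster M') := by
    intro a _ b _ hab
    simp only [Finset.disjoint_left, cluster, Finset.mem_filter]
    rintro x ⟨_, hx1⟩ ⟨_, hx2⟩
    exact hab (hx1 ▸ hx2 ▸ rfl)
  have hsub : (types M' \ types M).biUnion (cluster M') ⊆ R := by
    intro i hi
    obtain ⟨τ, hτ, hiτ⟩ := Finset.mem_biUnion.mp hi
    have hτ' := Finset.mem_sdiff.mp hτ
    simp only [cluster, Finset.mem_filter] at hiτ
    simp only [hRdef, Finset.mem_filter, Finset.mem_univ, true_and]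
    intro heq
    exact hτ'.2 (by rw [types, Finset.mem_image]; exact ⟨i, Finset.mem_univ _, heq.trans hiτ.2⟩)
  have hRcost : R.card ≤ editCost M M' := by
    rw [editCost]
    set P := ((Finset.univ : Finset (Fin m × Fin n)).filter
      (fun p => M p.1 p.2 ≠ M' p.1 p.2)) with hP
    have hPfib : P.card = ∑ i : Fin m, (P.filter (fun p => p.1 = i)).card :=
      Finset.card_eq_sum_card_fiberwise (f := Prod.fst) (fun x _ => Finset.mem_univ _)
    rw [hPfib]
    calc R.card = ∑ i ∈ R, 1 := by simp
      _ ≤ ∑ i ∈ R, (P.filter (fun p => p.1 = i)).card := by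
          apply Finset.sum_le_sum
          intro i hi
          simp only [hRdef, Finset.mem_filter, Finset.mem_univ, true_and] at hi
          obtain ⟨j, hj⟩ := Function.ne_iff.mp hi
          refine Nat.one_le_iff_ne_zero.mpr (Finset.card_ne_zero_of_mem (a := (i, j)) ?_)
          simp [hP, hj]
      _ ≤ ∑ i : Fin m, (P.filter (fun p => p.1 = i)).card :=
          Finset.sum_le_sum_of_subset (Finset.subset_univ R)
  calc fairletSize γ * (types M' \ types M).card
      = ∑ τ ∈ types M' \ types M, fairletSize γ := by rw [Finset.sum_const, smul_eq_mul, mul_comm]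
    _ ≤ ∑ τ ∈ types M' \ types M, (cluster M' τ).card := Finset.sum_le_sum key
    _ = ((types M' \ types M).biUnion (cluster M')).card :=
        (Finset.card_biUnion (fun a ha b hb hab => hdisj ha hb hab)).symm
    _ ≤ R.card := Finset.card_le_card hsub
    _ ≤ editCost M M' := hRcost
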